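/- For every continuous p : [0,1] → ℝ with p ≥ 0 pointwise, the function Tp is continuous on [0,1]. -/

import Mathlib

open Set Filter

noncomputable def Tmap (c : ℝ → ℝ) (g : ℕ → ℝ) (δ : ℝ) (p : ℝ → ℝ) (s : ℝ) : ℝ :=
  sInf {y : ℝ | ∃ k : ℕ, ∃ t : ℝ, 1 ≤ k ∧ 0 ≤ t ∧ t ≤ s ∧
    y = c (s - t) + g k + δ * k * p (t / k)}

theorem Tmap_continuousOn (c : ℝ → ℝ) (g : ℕ → ℝ) (δ : ℝ)
(hc_diff : DifferentiableOn ℝ c (Set.Icc 0 1))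
    (hc_mono : StrictMonoOn c (Set.Icc 0 1))
    (hc_conv : StrictConvexOn ℝ (Set.Icc 0 1) c)
    (hc0 : c 0 = 0) (hc'0 : 0 < deriv c 0)
    (hg_mono : StrictMonoOn g {k : ℕ | 1 ≤ k})
    (hg1 : g 1 = 0) (hg_nonneg : ∀ k : ℕ, 1 ≤ k → 0 ≤ g k)
    (hg_top : Tendsto g atTop atTop)
    (hδ : 1 < δ) :
    ∀ p : ℝ → ℝ, ContinuousOn p (Set.Icc 0 1) →
      (∀ s ∈ Set.Icc (0 : ℝ) 1, 0 ≤ p s) →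
      ContinuousOn (Tmap c g δ p) (Set.Icc 0 1) := by
  intro p hp hp0
  have hδ0 : (0:ℝ) < δ := zero_lt_one.trans hδ
  have hcont_c : ContinuousOn c (Icc 0 1) := hc_diff.continuousOn
  have hc_nonneg : ∀ x ∈ Icc (0:ℝ) 1, 0 ≤ c x := by
    intro x hx
    rcases eq_or_lt_of_le hx.1 with h | h
    · rw [← h, hc0]
    · have h2 := hc_mono (left_mem_Icc.mpr zero_le_one) hx h
      rw [hc0] at h2; exact le_of_lt h2
  have htk : ∀ (t s : ℝ) (k : ℕ), 1 ≤ k → 0 ≤ t → t ≤ s → s ≤ 1 →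
      t / (k:ℝ) ∈ Icc (0:ℝ) 1 := by
    intro t s k hk ht hts hs1
    have hk1 : (1:ℝ) ≤ (k:ℝ) := by exact_mod_cast hk
    constructor
    · exact div_nonneg ht (by linarith)
    · calc t / (k:ℝ) ≤ t := div_le_self ht hk1
        _ ≤ 1 := hts.trans hs1
  have hval_nonneg : ∀ s ∈ Icc (0:ℝ) 1, ∀ (k:ℕ) (t:ℝ), 1 ≤ k → 0 ≤ t → t ≤ s →
      0 ≤ c (s - t) + g k + δ * k * p (t / k) := by
    intro s hs k t hk ht hts
    have h1 : (0:ℝ) ≤ c (s - t) := hc_nonneg _ ⟨by linarith, by linarith [hs.2]⟩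
    have h2 : 0 ≤ g k := hg_nonneg k hk
    have h3 : 0 ≤ p (t / k) := hp0 _ (htk t s k hk ht hts hs.2)
    have h4 : (0:ℝ) ≤ (k:ℝ) := Nat.cast_nonneg k
    have h5 : 0 ≤ δ * k * p (t / k) := mul_nonneg (mul_nonneg hδ0.le h4) h3
    linarith
  have hbdd : ∀ s ∈ Icc (0:ℝ) 1, BddBelow {y : ℝ | ∃ k : ℕ, ∃ t : ℝ, 1 ≤ k ∧ 0 ≤ t ∧
      t ≤ s ∧ y = c (s - t) + g k + δ * k * p (t / k)} := by
    intro s hs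
    refine ⟨0, ?_⟩
    rintro y ⟨k, t, hk, ht, hts, rfl⟩
    exact hval_nonneg s hs k t hk ht hts
  have hne : ∀ s ∈ Icc (0:ℝ) 1, Set.Nonempty {y : ℝ | ∃ k : ℕ, ∃ t : ℝ, 1 ≤ k ∧ 0 ≤ t ∧
      t ≤ s ∧ y = c (s - t) + g k + δ * k * p (t / k)} := by
    intro s hs
    exact ⟨_, 1, s, le_refl 1, hs.1, le_refl s, rfl⟩
  have hTle : ∀ s ∈ Icc (0:ℝ) 1, ∀ (k:ℕ) (t:ℝ), 1 ≤ k → 0 ≤ t → t ≤ s →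
      Tmap c g δ p s ≤ c (s - t) + g k + δ * k * p (t / k) := by
    intro s hs k t hk ht hts
    exact csInf_le (hbdd s hs) ⟨k, t, hk, ht, hts, rfl⟩
  have hexists : ∀ s ∈ Icc (0:ℝ) 1, ∀ ε : ℝ, 0 < ε → ∃ (k:ℕ) (t:ℝ), 1 ≤ k ∧ 0 ≤ t ∧
      t ≤ s ∧ c (s - t) + g k + δ * k * p (t / k) < Tmap c g δ p s + ε := by
    intro s hs ε hε
    have h1 : Tmap c g δ p s < Tmap c g δ p s + ε := lt_add_of_pos_right _ hε
    obtain ⟨y, ⟨k, t, hk, ht, hts, rfl⟩, hlt⟩ := exists_lt_of_csInf_lt (hne s hs) h1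
    exact ⟨k, t, hk, ht, hts, hlt⟩
  -- uniform bound on p
  obtain ⟨C, hC⟩ := isCompact_Icc.exists_bound_of_continuousOn hp
  have hC0 : 0 ≤ C := le_trans (norm_nonneg _) (hC 0 (left_mem_Icc.mpr zero_le_one))
  have hpC : ∀ x ∈ Icc (0:ℝ) 1, p x ≤ C := fun x hx =>
    le_trans (le_abs_self _) (hC x hx)
  -- global upper bound on Tmap
  have hTB : ∀ s ∈ Icc (0:ℝ) 1, Tmap c g δ p s ≤ δ * C := by
    intro s hs
    have h1 := hTle s hs 1 s (le_refl 1) hs.1 (le_refl s)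
    have h2 : c (s - s) = 0 := by rw [sub_self, hc0]
    have h3 : s / ((1:ℕ):ℝ) = s := by norm_num
    rw [h2, h3, hg1] at h1
    have h4 : p s ≤ C := hpC s hs
    have h5 : δ * ((1:ℕ):ℝ) * p s ≤ δ * C := by
      push_cast
      nlinarith
    linarith
  -- choose cutoff K
  obtain ⟨K0, hK0⟩ := Filter.eventually_atTop.mp (hg_top.eventually_gt_atTop (δ * C))
  set K : ℕ := max K0 1 with hKdef
  have hK1 : 1 ≤ K := le_max_right _ _
  have hKpos : (0:ℝ) < (K:ℝ) := by exact_mod_cast hK1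
  -- uniform continuity moduli
  have hucc : ∀ ε : ℝ, 0 < ε → ∃ η > 0, ∀ x ∈ Icc (0:ℝ) 1, ∀ y ∈ Icc (0:ℝ) 1,
      dist x y < η → dist (c x) (c y) < ε := fun ε hε =>
    (Metric.uniformContinuousOn_iff.mp
      (isCompact_Icc.uniformContinuousOn_of_continuous hcont_c)) ε hε
  have hucp : ∀ ε : ℝ, 0 < ε → ∃ η > 0, ∀ x ∈ Icc (0:ℝ) 1, ∀ y ∈ Icc (0:ℝ) 1,
      dist x y < η → dist (p x) (p y) < ε := fun ε hε =>
    (Metric.uniformContinuousOn_iff.mp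
      (isCompact_Icc.uniformContinuousOn_of_continuous hp)) ε hε
  rw [Metric.continuousOn_iff]
  intro s hs ε hε
  obtain ⟨η1, hη1, hmod1⟩ := hucc (ε/4) (by linarith)
  obtain ⟨η2, hη2, hmod2⟩ := hucp (ε/(4*δ*K)) (by positivity)
  refine ⟨min η1 η2, lt_min hη1 hη2, ?_⟩
  have key : ∀ a ∈ Icc (0:ℝ) 1, ∀ b ∈ Icc (0:ℝ) 1, a ≤ b → b - a < min η1 η2 →
      Tmap c g δ p b < Tmap c g δ p a + ε ∧ Tmap c g δ p a < Tmap c g δ p b + ε := by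
    intro a ha b hb hab hsmall
    have hba1 : b - a < η1 := lt_of_lt_of_le hsmall (min_le_left _ _)
    have hba2 : b - a < η2 := lt_of_lt_of_le hsmall (min_le_right _ _)
    constructor
    · -- Tmap b < Tmap a + ε
      obtain ⟨k, t, hk, ht, hta, hlt⟩ := hexists a ha (ε/2) (by linarith)
      have htb : t ≤ b := hta.trans hab
      have hbt : b - t ∈ Icc (0:ℝ) 1 := ⟨by linarith, by linarith [hb.2]⟩
      have hat : a - t ∈ Icc (0:ℝ) 1 := ⟨by linarith, by linarith [ha.2]⟩
      have hd : dist (b - t) (a - t) < η1 := by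
        rw [Real.dist_eq]
        have : b - t - (a - t) = b - a := by ring
        rw [this, abs_of_nonneg (by linarith)]
        exact hba1
      have hcd := hmod1 _ hbt _ hat hd
      rw [Real.dist_eq] at hcd
      have hcd' : c (b - t) < c (a - t) + ε/4 := by
        have := abs_lt.mp hcd
        linarith [this.1, this.2]
      have h1 := hTle b hb k t hk ht htb
      linarith
    · -- Tmap a < Tmap b + ε
      obtain ⟨k, t, hk, ht, htb, hlt⟩ := hexists b hb (ε/4) (by linarith)
      by_cases hkK : k ≤ K
      · set t0 : ℝ := min t a with ht0def
        have ht0 : 0 ≤ t0 := le_min ht ha.1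
        have ht0a : t0 ≤ a := min_le_right _ _
        have ht0t : t0 ≤ t := min_le_left _ _
        have htt0 : t - t0 ≤ b - a := by
          rcases le_total t a with h | h
          · rw [ht0def, min_eq_left h]; linarith
          · rw [ht0def, min_eq_right h]; linarith
        -- c bound
        have hat0 : a - t0 ∈ Icc (0:ℝ) 1 := ⟨by linarith, by linarith [ha.2]⟩
        have hbt : b - t ∈ Icc (0:ℝ) 1 := ⟨by linarith, by linarith [hb.2]⟩
        have hd : dist (a - t0) (b - t) < η1 := by
          rw [Real.dist_eq]
          have h1 : a - t0 - (b - t) = (t - t0) - (b - a) := by ring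
          rw [h1]
          have habs : |(t - t0) - (b - a)| ≤ b - a :=
            abs_le.mpr ⟨by linarith, by linarith⟩
          exact lt_of_le_of_lt habs hba1
        have hcd := hmod1 _ hat0 _ hbt hd
        rw [Real.dist_eq] at hcd
        have hcd' : c (a - t0) < c (b - t) + ε/4 := by
          have := abs_lt.mp hcd
          linarith [this.1, this.2]
        -- p bound
        have hk1 : (1:ℝ) ≤ (k:ℝ) := by exact_mod_cast hk
        have ht0k : t0 / (k:ℝ) ∈ Icc (0:ℝ) 1 := htk t0 a k hk ht0 ht0a ha.2
        have htkm : t / (k:ℝ) ∈ Icc (0:ℝ) 1 := htk t b k hk ht htb hb.2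
        have hdp : dist (t0 / (k:ℝ)) (t / (k:ℝ)) < η2 := by
          rw [Real.dist_eq]
          have h1 : t0 / (k:ℝ) - t / (k:ℝ) = -((t - t0) / (k:ℝ)) := by ring
          rw [h1, abs_neg, abs_of_nonneg (div_nonneg (by linarith) (by linarith))]
          calc (t - t0) / (k:ℝ) ≤ t - t0 := div_le_self (by linarith) hk1
            _ ≤ b - a := htt0
            _ < η2 := hba2
        have hpd := hmod2 _ ht0k _ htkm hdp
        rw [Real.dist_eq] at hpd
        have hpd' : p (t0 / (k:ℝ)) - p (t / (k:ℝ)) < ε/(4*δ*K) := by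
          have := abs_lt.mp hpd
          linarith [this.1, this.2]
        have hkKr : (k:ℝ) ≤ (K:ℝ) := by exact_mod_cast hkK
        have hδk0 : (0:ℝ) ≤ δ * k := mul_nonneg hδ0.le (by linarith)
        have hδkK : δ * (k:ℝ) ≤ δ * (K:ℝ) := mul_le_mul_of_nonneg_left hkKr hδ0.le
        have hεK : δ * (K:ℝ) * (ε/(4*δ*K)) = ε/4 := by
          field_simp
        have hpterm : δ * k * p (t0 / (k:ℝ)) ≤ δ * k * p (t / (k:ℝ)) + ε/4 := by
          have h1 : δ * k * (p (t0 / (k:ℝ)) - p (t / (k:ℝ))) ≤ δ * k * (ε/(4*δ*K)) :=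
            mul_le_mul_of_nonneg_left (le_of_lt hpd') hδk0
          have h2 : δ * k * (ε/(4*δ*K)) ≤ δ * K * (ε/(4*δ*K)) :=
            mul_le_mul_of_nonneg_right hδkK (by positivity)
          have h3 : δ * k * p (t0 / (k:ℝ)) - δ * k * p (t / (k:ℝ))
              = δ * k * (p (t0 / (k:ℝ)) - p (t / (k:ℝ))) := by ring
          linarith
        have h1 := hTle a ha k t0 hk ht0 ht0a
        linarith
      · -- k > K : value is large
        have hkK' : K0 ≤ k := (le_max_left K0 1).trans (le_of_lt (not_le.mp hkK))
        have hgk : δ * C < g k := hK0 k hkK'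
        have h1 : (0:ℝ) ≤ c (b - t) := hc_nonneg _ ⟨by linarith, by linarith [hb.2]⟩
        have h3 : 0 ≤ p (t / k) := hp0 _ (htk t b k hk ht htb hb.2)
        have h5 : 0 ≤ δ * k * p (t / k) :=
          mul_nonneg (mul_nonneg hδ0.le (Nat.cast_nonneg k)) h3
        have h6 := hTB a ha
        linarith
  intro s' hs' hdist
  rw [Real.dist_eq] at hdist
  obtain ⟨hd1, hd2⟩ := abs_lt.mp hdist
  rcases le_total s s' with h | h
  · obtain ⟨h1, h2⟩ := key s hs s' hs' h (by linarith)
    rw [Real.dist_eq, abs_lt]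
    constructor <;> linarith
  · obtain ⟨h1, h2⟩ := key s' hs' s hs h (by linarith)
    rw [Real.dist_eq, abs_lt]
    constructor <;> linarith
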